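/- Let A be a bialgebra over a field k and D ∈ A a group-like element. Then the Ore-free localization A[D⁻¹] (the pushout of algebras A ⟶ A ⊔ k⟨D⁻¹⟩ / (DD⁻¹ = 1 = D⁻¹D)) carries a unique bialgebra structure such that the canonical map A → A[D⁻¹] is a bialgebra morphism and D⁻¹ is group-like. -/

import Mathlib

open scoped TensorProduct

/-- Let `A` be a bialgebra, `D ∈ A` group-like, and let `(L, φ, Dinv)` be the Ore-free
localization `A[D⁻¹]`, i.e. `φ D * Dinv = 1 = Dinv * φ D` and the universal property among
`k`-algebras holds.  Then `L` carries a unique bialgebra structure (an algebra-map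
comultiplication and counit) such that `φ` is a bialgebra morphism and `Dinv` is
group-like. -/
theorem stmt16 {k : Type} [Field k] {A : Type} [Ring A] [Bialgebra k A]
    (D : A) (hD : Coalgebra.comul (R := k) D = D ⊗ₜ[k] D)
    (hDε : Coalgebra.counit (R := k) D = 1)
    (L : Type) [Ring L] [Algebra k L] (φ : A →ₐ[k] L) (Dinv : L)
    (hinv₁ : φ D * Dinv = 1) (hinv₂ : Dinv * φ D = 1)
    (huniv : ∀ (B : Type) [Ring B] [Algebra k B] (ψ : A →ₐ[k] B) (e : B),
      ψ D * e = 1 → e * ψ D = 1 →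
      ∃! χ : L →ₐ[k] B, χ.comp φ = ψ ∧ χ Dinv = e) :
    ∃! p : (L →ₐ[k] (L ⊗[k] L)) × (L →ₐ[k] k),
      -- coassociativity
      ((TensorProduct.assoc k L L L).toLinearMap ∘ₗ
          p.1.toLinearMap.rTensor L ∘ₗ p.1.toLinearMap =
        p.1.toLinearMap.lTensor L ∘ₗ p.1.toLinearMap) ∧
      -- counit axioms
      ((TensorProduct.lid k L).toLinearMap ∘ₗ
          p.2.toLinearMap.rTensor L ∘ₗ p.1.toLinearMap = LinearMap.id) ∧
      ((TensorProduct.rid k L).toLinearMap ∘ₗ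
          p.2.toLinearMap.lTensor L ∘ₗ p.1.toLinearMap = LinearMap.id) ∧
      -- `φ` is a morphism of bialgebras
      (∀ a : A, p.1 (φ a) =
        Algebra.TensorProduct.map φ φ (Coalgebra.comul (R := k) a)) ∧
      (∀ a : A, p.2 (φ a) = Coalgebra.counit (R := k) a) ∧
      -- `Dinv` is group-like
      p.1 Dinv = Dinv ⊗ₜ[k] Dinv ∧ p.2 Dinv = 1 := by  classical
  -- agreement lemma
  have key : ∀ (B : Type) [Ring B] [Algebra k B] (χ χ' : L →ₐ[k] B),
      (∀ a : A, χ (φ a) = χ' (φ a)) → χ Dinv = χ' Dinv → χ = χ' := by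
    intro B _ _ χ χ' h1 h2
    have hm1 : (χ.comp φ) D * χ Dinv = 1 := by
      simp only [AlgHom.comp_apply, ← map_mul, hinv₁, map_one]
    have hm2 : χ Dinv * (χ.comp φ) D = 1 := by
      simp only [AlgHom.comp_apply, ← map_mul, hinv₂, map_one]
    obtain ⟨u, _, hu⟩ := huniv B (χ.comp φ) (χ Dinv) hm1 hm2
    rw [hu χ ⟨rfl, rfl⟩, hu χ' ⟨(AlgHom.ext fun a => (h1 a).symm), h2.symm⟩]
  -- construct Δ
  set ψΔ : A →ₐ[k] L ⊗[k] L :=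
    (Algebra.TensorProduct.map φ φ).comp (Bialgebra.comulAlgHom k A) with hψΔ
  have hψΔD : ψΔ D = φ D ⊗ₜ[k] φ D := by
    simp [hψΔ, Bialgebra.comulAlgHom_apply, hD]
  obtain ⟨Δ, ⟨hΔφ, hΔinv⟩, -⟩ :=
    huniv (L ⊗[k] L) ψΔ (Dinv ⊗ₜ[k] Dinv)
      (by rw [hψΔD, Algebra.TensorProduct.tmul_mul_tmul, hinv₁,
        Algebra.TensorProduct.one_def])
      (by rw [hψΔD, Algebra.TensorProduct.tmul_mul_tmul, hinv₂,
        Algebra.TensorProduct.one_def])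
  obtain ⟨ε, ⟨hεφ, hεinv⟩, -⟩ :=
    huniv k (Bialgebra.counitAlgHom k A) 1
      (by rw [Bialgebra.counitAlgHom_apply, hDε, mul_one])
      (by rw [Bialgebra.counitAlgHom_apply, hDε, one_mul])
  have hΔφ' : ∀ a : A, Δ (φ a) =
      Algebra.TensorProduct.map φ φ (Coalgebra.comul (R := k) a) := fun a =>
    AlgHom.congr_fun hΔφ a
  have hεφ' : ∀ a : A, ε (φ a) = Coalgebra.counit (R := k) a := fun a =>
    AlgHom.congr_fun hεφ a
  have hΔφl : Δ.toLinearMap ∘ₗ φ.toLinearMap =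
      TensorProduct.map φ.toLinearMap φ.toLinearMap ∘ₗ Coalgebra.comul := by
    ext a; exact hΔφ' a
  have hεφl : ε.toLinearMap ∘ₗ φ.toLinearMap = Coalgebra.counit := by
    ext a; exact hεφ' a
  -- composite tensor lemmas
  have m1 : Δ.toLinearMap.rTensor L ∘ₗ
      TensorProduct.map φ.toLinearMap φ.toLinearMap =
      TensorProduct.map (TensorProduct.map φ.toLinearMap φ.toLinearMap) φ.toLinearMap ∘ₗ
        (Coalgebra.comul (R := k) (A := A)).rTensor A := by
    rw [LinearMap.rTensor, LinearMap.rTensor, ← TensorProduct.map_comp,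
      ← TensorProduct.map_comp]
    simp [hΔφl]
  have m2 : TensorProduct.map φ.toLinearMap
      (TensorProduct.map φ.toLinearMap φ.toLinearMap) ∘ₗ
        (Coalgebra.comul (R := k) (A := A)).lTensor A =
      Δ.toLinearMap.lTensor L ∘ₗ
        TensorProduct.map φ.toLinearMap φ.toLinearMap := by
    rw [LinearMap.lTensor, LinearMap.lTensor, ← TensorProduct.map_comp,
      ← TensorProduct.map_comp]
    simp [hΔφl]
  have n1 : ε.toLinearMap.rTensor L ∘ₗ
      TensorProduct.map φ.toLinearMap φ.toLinearMap =
      φ.toLinearMap.lTensor k ∘ₗ (Coalgebra.counit (R := k) (A := A)).rTensor A := by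
    rw [LinearMap.rTensor, LinearMap.rTensor, LinearMap.lTensor,
      ← TensorProduct.map_comp, ← TensorProduct.map_comp]
    simp [hεφl]
  have n2 : ε.toLinearMap.lTensor L ∘ₗ
      TensorProduct.map φ.toLinearMap φ.toLinearMap =
      φ.toLinearMap.rTensor k ∘ₗ (Coalgebra.counit (R := k) (A := A)).lTensor A := by
    rw [LinearMap.rTensor, LinearMap.lTensor, LinearMap.lTensor,
      ← TensorProduct.map_comp, ← TensorProduct.map_comp]
    simp [hεφl]
  -- coassociativity
  have coassoc : (TensorProduct.assoc k L L L).toLinearMap ∘ₗ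
      Δ.toLinearMap.rTensor L ∘ₗ Δ.toLinearMap =
        Δ.toLinearMap.lTensor L ∘ₗ Δ.toLinearMap := by
    set F : L →ₐ[k] L ⊗[k] (L ⊗[k] L) :=
      ((Algebra.TensorProduct.assoc k k k L L L).toAlgHom.comp
        (Algebra.TensorProduct.map Δ (AlgHom.id k L))).comp Δ with hF
    set G : L →ₐ[k] L ⊗[k] (L ⊗[k] L) :=
      (Algebra.TensorProduct.map (AlgHom.id k L) Δ).comp Δ with hG
    have hFG : F = G := by
      refine key _ F G (fun a => ?_) ?_
      · have e1 : F (φ a) = TensorProduct.assoc k L L L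
            (Δ.toLinearMap.rTensor L
              (TensorProduct.map φ.toLinearMap φ.toLinearMap (Coalgebra.comul a))) := by
          simp only [hF, AlgHom.comp_apply, hΔφ' a]
          rfl
        have e2 : G (φ a) = Δ.toLinearMap.lTensor L
            (TensorProduct.map φ.toLinearMap φ.toLinearMap (Coalgebra.comul a)) := by
          simp only [hG, AlgHom.comp_apply, hΔφ' a]
          rfl
        have h1 := LinearMap.congr_fun m1 (Coalgebra.comul (R := k) a)
        have h2 := LinearMap.congr_fun m2 (Coalgebra.comul (R := k) a)
        simp only [LinearMap.comp_apply] at h1 h2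
        rw [e1, e2, h1, ← TensorProduct.map_map_assoc, Coalgebra.coassoc_apply, h2]
      · simp [hF, hG, hΔinv]
    ext x
    have := AlgHom.congr_fun hFG x
    exact this
  -- left counit axiom
  have lcounit : (TensorProduct.lid k L).toLinearMap ∘ₗ
      ε.toLinearMap.rTensor L ∘ₗ Δ.toLinearMap = LinearMap.id := by
    set F : L →ₐ[k] L :=
      ((Algebra.TensorProduct.lid k L).toAlgHom.comp
        (Algebra.TensorProduct.map ε (AlgHom.id k L))).comp Δ with hF
    have hFG : F = AlgHom.id k L := by
      refine key _ F (AlgHom.id k L) (fun a => ?_) ?_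
      · have e1 : F (φ a) = TensorProduct.lid k L
            (ε.toLinearMap.rTensor L
              (TensorProduct.map φ.toLinearMap φ.toLinearMap (Coalgebra.comul a))) := by
          simp only [hF, AlgHom.comp_apply, hΔφ' a]
          rfl
        have h1 := LinearMap.congr_fun n1 (Coalgebra.comul (R := k) a)
        simp only [LinearMap.comp_apply] at h1
        rw [e1, h1, Coalgebra.rTensor_counit_comul]
        simp
      · simp [hF, hΔinv, hεinv]
    ext x
    have := AlgHom.congr_fun hFG x
    exact this
  -- right counit axiom
  have hrid : ∀ y : L ⊗[k] k, Algebra.TensorProduct.rid k k L y =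
      TensorProduct.rid k L y := by
    intro y
    induction y using TensorProduct.induction_on with
    | zero => simp
    | tmul a r => simp [Algebra.TensorProduct.rid_tmul]
    | add x y hx hy => simp [map_add, hx, hy]
  have rcounit : (TensorProduct.rid k L).toLinearMap ∘ₗ
      ε.toLinearMap.lTensor L ∘ₗ Δ.toLinearMap = LinearMap.id := by
    set F : L →ₐ[k] L :=
      ((Algebra.TensorProduct.rid k k L).toAlgHom.comp
        (Algebra.TensorProduct.map (AlgHom.id k L) ε)).comp Δ with hF
    have hFG : F = AlgHom.id k L := by
      refine key _ F (AlgHom.id k L) (fun a => ?_) ?_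
      · have e1 : F (φ a) = Algebra.TensorProduct.rid k k L
            (ε.toLinearMap.lTensor L
              (TensorProduct.map φ.toLinearMap φ.toLinearMap (Coalgebra.comul a))) := by
          simp only [hF, AlgHom.comp_apply, hΔφ' a]
          rfl
        have h1 := LinearMap.congr_fun n2 (Coalgebra.comul (R := k) a)
        simp only [LinearMap.comp_apply] at h1
        rw [e1, h1, Coalgebra.lTensor_counit_comul, hrid]
        simp
      · have : F Dinv = Algebra.TensorProduct.rid k k L (Dinv ⊗ₜ[k] (1 : k)) := by
          simp [hF, hΔinv, hεinv]
        rw [this, hrid]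
        simp
    ext x
    have hx := AlgHom.congr_fun hFG x
    calc (TensorProduct.rid k L) (ε.toLinearMap.lTensor L (Δ.toLinearMap x))
        = Algebra.TensorProduct.rid k k L
            (ε.toLinearMap.lTensor L (Δ.toLinearMap x)) := (hrid _).symm
      _ = F x := rfl
      _ = x := by rw [hx]; rfl
  refine ⟨(Δ, ε), ⟨coassoc, lcounit, rcounit, hΔφ', hεφ', hΔinv, hεinv⟩, ?_⟩
  rintro ⟨Δ', ε'⟩ ⟨-, -, -, h4, h5, h6, h7⟩
  have e1 : Δ' = Δ := key _ Δ' Δ (fun a => by rw [h4 a, hΔφ' a]) (by rw [h6, hΔinv])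
  have e2 : ε' = ε := key _ ε' ε (fun a => by rw [h5 a, hεφ' a]) (by rw [h7, hεinv])
  simp [e1, e2]
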